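/- The minimal class of languages over the one-letter alphabet {1} that contains every singleton language {1^n} (n ∈ ℕ) and is closed under concatenation and Kleene star equals the class {L((x_1,...,x_m),a) : (x_1,...,x_m) ∈ ℕ*, a ∈ ℕ}. -/

import Mathlib

open Computability

/-- The unary language `L((x_1,…,x_m), a) = {1^n : n = c_1·x_1 + … + c_m·x_m + a}`. -/
def unaryL (xs : List ℕ) (a : ℕ) : Language Unit :=
  {w | ∃ c : Fin xs.length → ℕ,
    w = List.replicate ((∑ i, c i * xs.get i) + a) ()}

/-- The minimal class of languages over `{1}` containing every singleton `{1^n}`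
and closed under concatenation and Kleene star. -/
inductive L0 : Language Unit → Prop
  | single (n : ℕ) : L0 {List.replicate n ()}
  | mul {l m : Language Unit} : L0 l → L0 m → L0 (l * m)
  | star {l : Language Unit} : L0 l → L0 (l∗)

/-! ### Auxiliary material -/

/-- The set of naturals `{c·xs + a}`. -/
def NL (xs : List ℕ) (a : ℕ) : Set ℕ :=
  {n | ∃ c : Fin xs.length → ℕ, n = (∑ i, c i * xs.get i) + a}

/-- Addition of sets of naturals. -/
def addS (S T : Set ℕ) : Set ℕ := {n | ∃ s ∈ S, ∃ t ∈ T, n = s + t}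

/-- The language of words whose length lies in `S`. -/
def lenLang (S : Set ℕ) : Language Unit := {w | w.length ∈ S}

lemma list_unit_eq (w : List Unit) : w = List.replicate w.length () := by
  apply List.eq_replicate_of_mem
  intro b _; rfl

lemma unaryL_eq_lenLang (xs : List ℕ) (a : ℕ) : unaryL xs a = lenLang (NL xs a) := by
  ext w
  constructor
  · rintro ⟨c, rfl⟩
    exact ⟨c, by simp⟩
  · rintro ⟨c, h⟩
    exact ⟨c, by rw [← h]; exact list_unit_eq w⟩

lemma lenLang_singleton (n : ℕ) :
    ({List.replicate n ()} : Language Unit) = lenLang {n} := by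
  ext w
  constructor
  · rintro rfl
    show (List.replicate n ()).length ∈ ({n} : Set ℕ)
    simp
  · intro h
    have : w.length = n := h
    rw [list_unit_eq w, this]; rfl

lemma lenLang_mul (S T : Set ℕ) : lenLang S * lenLang T = lenLang (addS S T) := by
  ext w
  rw [Language.mem_mul]
  constructor
  · rintro ⟨u, hu, v, hv, rfl⟩
    exact ⟨u.length, hu, v.length, hv, by simp⟩
  · rintro ⟨s, hs, t, ht, hw⟩
    refine ⟨List.replicate s (), ?_, List.replicate t (), ?_, ?_⟩
    · show (List.replicate s ()).length ∈ S; simpa using hs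
    · show (List.replicate t ()).length ∈ T; simpa using ht
    rw [← List.replicate_add, ← hw]
    exact (list_unit_eq w).symm

lemma flatten_map_replicate (l : List ℕ) :
    (l.map fun n => List.replicate n ()).flatten = List.replicate l.sum () := by
  induction l with
  | nil => simp
  | cons x xs ih =>
    rw [List.map_cons, List.flatten_cons, ih, List.sum_cons, List.replicate_add]

lemma lenLang_star (S : Set ℕ) :
    (lenLang S)∗ = lenLang ↑(AddSubmonoid.closure S) := by
  ext w
  rw [Language.mem_kstar]
  constructor
  · rintro ⟨L, rfl, hL⟩
    show L.flatten.length ∈ (↑(AddSubmonoid.closure S) : Set ℕ)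
    rw [List.length_flatten]
    refine AddSubmonoid.list_sum_mem _ ?_
    intro y hy
    obtain ⟨u, hu, rfl⟩ := List.mem_map.1 hy
    exact AddSubmonoid.subset_closure (hL u hu)
  · intro h
    obtain ⟨l, hl, hsum⟩ := AddSubmonoid.exists_list_of_mem_closure h
    refine ⟨l.map fun n => List.replicate n (), ?_, ?_⟩
    · rw [flatten_map_replicate, hsum]
      exact list_unit_eq w
    · intro y hy
      obtain ⟨u, hu, rfl⟩ := List.mem_map.1 hy
      show (List.replicate u ()).length ∈ S
      simpa using hl u hu

lemma NL_nil (a : ℕ) : NL [] a = {a} := by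
  ext n
  simp [NL]

lemma sum_cons_split (x : ℕ) (xs : List ℕ) (a : ℕ) (c : Fin (x :: xs).length → ℕ) :
    (∑ i, c i * (x :: xs).get i) + a
      = c ⟨0, Nat.succ_pos _⟩ * x + ((∑ i : Fin xs.length, c i.succ * xs.get i) + a) := by
  simp [Fin.sum_univ_succ, add_assoc]

lemma NL_cons (x : ℕ) (xs : List ℕ) (a : ℕ) :
    NL (x :: xs) a = {n | ∃ k, ∃ s ∈ NL xs a, n = k * x + s} := by
  ext n
  simp only [NL, Set.mem_setOf_eq]
  constructor
  · rintro ⟨c, rfl⟩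
    exact ⟨c ⟨0, Nat.succ_pos _⟩, (∑ i, c i.succ * xs.get i) + a,
      ⟨fun i => c i.succ, rfl⟩, sum_cons_split x xs a c⟩
  · rintro ⟨k, s, ⟨c, rfl⟩, rfl⟩
    refine ⟨Fin.cons k c, ?_⟩
    rw [sum_cons_split x xs a (Fin.cons k c)]
    simp

lemma NL_add (xs ys : List ℕ) (a b : ℕ) :
    addS (NL xs a) (NL ys b) = NL (xs ++ ys) (a + b) := by
  induction xs with
  | nil =>
    ext n
    simp only [addS, NL_nil, Set.mem_singleton_iff, Set.mem_setOf_eq, List.nil_append]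
    constructor
    · rintro ⟨s, rfl, t, ⟨d, rfl⟩, rfl⟩
      exact ⟨d, by omega⟩
    · rintro ⟨d, rfl⟩
      exact ⟨a, rfl, (∑ i, d i * ys.get i) + b, ⟨d, rfl⟩, by omega⟩
  | cons x xs ih =>
    ext n
    simp only [addS, NL_cons, List.cons_append, Set.mem_setOf_eq]
    constructor
    · rintro ⟨s, ⟨k, s', hs', rfl⟩, t, ht, rfl⟩
      refine ⟨k, s' + t, ?_, by omega⟩
      rw [← ih]
      exact ⟨s', hs', t, ht, rfl⟩
    · rintro ⟨k, u, hu, rfl⟩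
      rw [← ih] at hu
      obtain ⟨s', hs', t, ht, rfl⟩ := hu
      exact ⟨k * x + s', ⟨k, s', hs', rfl⟩, t, ht, by omega⟩

lemma single_mem_NL_zero {xs : List ℕ} {y : ℕ} (h : y ∈ xs) : y ∈ NL xs 0 := by
  obtain ⟨i, rfl⟩ := List.mem_iff_get.1 h
  exact ⟨fun j => if j = i then 1 else 0, by simp [ite_mul, Finset.sum_ite_eq']⟩

lemma NL_zero_add_mem {xs : List ℕ} {p q : ℕ}
    (hp : p ∈ NL xs 0) (hq : q ∈ NL xs 0) : p + q ∈ NL xs 0 := by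
  obtain ⟨c, rfl⟩ := hp
  obtain ⟨d, rfl⟩ := hq
  exact ⟨fun i => c i + d i, by simp [add_mul, Finset.sum_add_distrib]⟩

lemma NL_zero_closure (xs : List ℕ) :
    NL xs 0 = ↑(AddSubmonoid.closure {n | n ∈ xs}) := by
  apply Set.Subset.antisymm
  · rintro n ⟨c, rfl⟩
    rw [add_zero]
    refine AddSubmonoid.sum_mem _ ?_
    intro i _
    show c i * xs.get i ∈ AddSubmonoid.closure {n | n ∈ xs}
    have : c i * xs.get i = c i • xs.get i := by simp
    rw [this]
    exact AddSubmonoid.nsmul_mem _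
      (AddSubmonoid.subset_closure
        (show xs.get i ∈ {n | n ∈ xs} from xs.get_mem i)) (c i)
  · intro n hn
    obtain ⟨l, hl, hsum⟩ := AddSubmonoid.exists_list_of_mem_closure hn
    rw [← hsum]
    clear hsum hn
    induction l with
    | nil => exact ⟨0, by simp⟩
    | cons y ys ih =>
      rw [List.sum_cons]
      exact NL_zero_add_mem (single_mem_NL_zero (hl y (by simp)))
        (ih fun z hz => hl z (by simp [hz]))

/-- Generators of the star of `NL xs a`: all `a + ∑ cᵢ·xᵢ` with `cᵢ < a`. -/
def gens (a : ℕ) : List ℕ → ℕ → List ℕ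
  | [], v => [v]
  | x :: xs, v => (List.range a).flatMap fun c => gens a xs (v + c * x)

lemma mem_gens (a : ℕ) : ∀ (xs : List ℕ) (v n : ℕ),
    n ∈ gens a xs v ↔
      ∃ c : Fin xs.length → ℕ, (∀ i, c i < a) ∧ n = v + ∑ i, c i * xs.get i := by
  intro xs
  induction xs with
  | nil =>
    intro v n
    simp [gens, eq_comm]
  | cons x xs ih =>
    intro v n
    simp only [gens, List.mem_flatMap, List.mem_range]
    constructor
    · rintro ⟨k, hk, hmem⟩
      obtain ⟨c, hc, rfl⟩ := (ih _ _).1 hmem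
      refine ⟨Fin.cons k c, ?_, ?_⟩
      · intro i
        refine Fin.cases ?_ ?_ i
        · simpa using hk
        · intro j; simpa using hc j
      · have h := sum_cons_split x xs 0 (Fin.cons k c)
        simp only [add_zero] at h
        rw [h]
        simp [add_assoc]
    · rintro ⟨c, hc, rfl⟩
      refine ⟨c ⟨0, Nat.succ_pos _⟩, hc _,
        (ih _ _).2 ⟨fun i => c i.succ, fun i => hc i.succ, ?_⟩⟩
      have h := sum_cons_split x xs 0 c
      simp only [add_zero] at h
      rw [h]
      beta_reduce
      omega

lemma gens_subset_NL {a : ℕ} {xs : List ℕ} {y : ℕ} (hy : y ∈ gens a xs a) :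
    y ∈ NL xs a := by
  obtain ⟨c, _, rfl⟩ := (mem_gens a xs a y).1 hy
  exact ⟨c, by omega⟩

lemma a_mem_gens {a : ℕ} (ha : 0 < a) (xs : List ℕ) : a ∈ gens a xs a :=
  (mem_gens a xs a a).2 ⟨fun _ => 0, fun _ => ha, by simp⟩

lemma NL_mem_closure_gens {a : ℕ} (ha : 0 < a) (xs : List ℕ) :
    ∀ C : Fin xs.length → ℕ,
      (∑ i, C i * xs.get i) + a ∈ AddSubmonoid.closure {n | n ∈ gens a xs a} := by
  suffices H : ∀ N (C : Fin xs.length → ℕ), (∑ i, C i) = N →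
      (∑ i, C i * xs.get i) + a ∈ AddSubmonoid.closure {n | n ∈ gens a xs a} by
    intro C; exact H _ C rfl
  intro N
  induction N using Nat.strong_induction_on with
  | _ N IH =>
    intro C hC
    by_cases hall : ∀ i, C i < a
    · exact AddSubmonoid.subset_closure
        ((mem_gens a xs a _).2 ⟨C, hall, by omega⟩)
    · push_neg at hall
      obtain ⟨i, hi⟩ := hall
      set C' : Fin xs.length → ℕ := Function.update C i (C i - a) with hC'
      have hCother : ∀ j ∈ Finset.univ \ {i}, C' j = C j := by
        intro j hj
        rw [Finset.mem_sdiff, Finset.mem_singleton] at hj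
        exact Function.update_of_ne hj.2 _ _
      have hsplit : ∀ (f : Fin xs.length → ℕ),
          ∑ j, f j = f i + ∑ j ∈ Finset.univ \ {i}, f j := by
        intro f
        rw [Finset.sum_eq_sum_sdiff_singleton_add (Finset.mem_univ i) f]
        omega
      have hCi' : C' i = C i - a := Function.update_self _ _ _
      -- coefficient sum decreases
      have hsum' : ∑ j, C' j < N := by
        have h1 := hsplit C'
        have h2 := hsplit C
        have h3 : ∑ j ∈ Finset.univ \ {i}, C' j
            = ∑ j ∈ Finset.univ \ {i}, C j :=
          Finset.sum_congr rfl hCother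
        omega
      -- value identity
      have hval : (∑ j, C j * xs.get j) + a
          = (((∑ j, C' j * xs.get j) + a) + a * xs.get i) := by
        have h1 := hsplit (fun j => C' j * xs.get j)
        have h2 := hsplit (fun j => C j * xs.get j)
        have h3 : ∑ j ∈ Finset.univ \ {i}, C' j * xs.get j
            = ∑ j ∈ Finset.univ \ {i}, C j * xs.get j :=
          Finset.sum_congr rfl fun j hj => by rw [hCother j hj]
        have h4 : C' i * xs.get i + a * xs.get i = C i * xs.get i := by
          rw [hCi', ← add_mul, Nat.sub_add_cancel hi]
        omega
      rw [hval]
      refine AddSubmonoid.add_mem _ (IH _ hsum' C' rfl) ?_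
      show a * xs.get i ∈ AddSubmonoid.closure {n | n ∈ gens a xs a}
      have : a * xs.get i = xs.get i • a := by rw [smul_eq_mul, mul_comm]
      rw [this]
      exact AddSubmonoid.nsmul_mem _
        (AddSubmonoid.subset_closure
          (show a ∈ {n | n ∈ gens a xs a} from a_mem_gens ha xs)) (xs.get i)

lemma star_key (xs : List ℕ) (a : ℕ) :
    ∃ ys : List ℕ, (↑(AddSubmonoid.closure (NL xs a)) : Set ℕ) = NL ys 0 := by
  rcases Nat.eq_zero_or_pos a with rfl | ha
  · refine ⟨xs, ?_⟩
    rw [NL_zero_closure, AddSubmonoid.closure_eq, ← NL_zero_closure]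
  · refine ⟨gens a xs a, ?_⟩
    have key : AddSubmonoid.closure (NL xs a)
        = AddSubmonoid.closure {n | n ∈ gens a xs a} := by
      apply le_antisymm
      · refine AddSubmonoid.closure_le.2 ?_
        rintro n ⟨C, rfl⟩
        exact NL_mem_closure_gens ha xs C
      · refine AddSubmonoid.closure_le.2 ?_
        intro y hy
        exact AddSubmonoid.subset_closure (gens_subset_NL hy)
    rw [NL_zero_closure, key]

lemma NL_cons_addS (x : ℕ) (xs : List ℕ) (a : ℕ) :
    addS (↑(AddSubmonoid.closure ({x} : Set ℕ))) (NL xs a) = NL (x :: xs) a := by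
  rw [NL_cons]
  ext n
  simp only [addS, Set.mem_setOf_eq, SetLike.mem_coe,
    AddSubmonoid.mem_closure_singleton]
  constructor
  · rintro ⟨s, ⟨k, rfl⟩, t, ht, rfl⟩
    exact ⟨k, t, ht, by simp [mul_comm]⟩
  · rintro ⟨k, s, hs, rfl⟩
    exact ⟨k * x, ⟨k, by simp [mul_comm]⟩, s, hs, rfl⟩

theorem L0_eq_unaryL :
    {l : Language Unit | L0 l} =
      {l : Language Unit | ∃ (xs : List ℕ) (a : ℕ), l = unaryL xs a} := by
  ext l
  simp only [Set.mem_setOf_eq]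
  constructor
  · intro hl
    induction hl with
    | single n =>
      exact ⟨[], n, by rw [unaryL_eq_lenLang, NL_nil, ← lenLang_singleton]⟩
    | mul h1 h2 ih1 ih2 =>
      obtain ⟨xs, a, rfl⟩ := ih1
      obtain ⟨ys, b, rfl⟩ := ih2
      exact ⟨xs ++ ys, a + b, by
        rw [unaryL_eq_lenLang, unaryL_eq_lenLang, unaryL_eq_lenLang,
          lenLang_mul, NL_add]⟩
    | star h ih =>
      obtain ⟨xs, a, rfl⟩ := ih
      obtain ⟨ys, hys⟩ := star_key xs a
      exact ⟨ys, 0, by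
        rw [unaryL_eq_lenLang, unaryL_eq_lenLang, lenLang_star, hys]⟩
  · rintro ⟨xs, a, rfl⟩
    induction xs generalizing a with
    | nil =>
      rw [unaryL_eq_lenLang, NL_nil, ← lenLang_singleton]
      exact L0.single a
    | cons x xs ih =>
      have : unaryL (x :: xs) a = ({List.replicate x ()} : Language Unit)∗ * unaryL xs a := by
        rw [lenLang_singleton, lenLang_star, unaryL_eq_lenLang xs a, lenLang_mul,
          NL_cons_addS, unaryL_eq_lenLang]
      rw [this]
      exact L0.mul (L0.star (L0.single x)) (ih a)
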